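/- Let K be an algebraically closed field, L a finite-dimensional Lie algebra over K, R a field extension of K, and φ : L → Der_K(R) an injective homomorphism of Lie algebras over K such that the R-linear span of φ(L) in Der_K(R) has finite dimension k over R. Then L has a Lie subalgebra L₁ of codimension k over K, i.e., with finrank_K(L ⧸ L₁) = k. -/

import Mathlib

open TensorProduct

lemma derivation_sum_apply {ι : Type*} (K R : Type) [Field K] [Field R] [Algebra K R]
    (s : Finset ι) (D : ι → Derivation K R R) (a : R) :
    (∑ i ∈ s, D i) a = ∑ i ∈ s, D i a := by
  induction s using Finset.cons_induction with
  | empty => simp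
  | cons i s hi ih => simp [Finset.sum_cons, Derivation.add_apply, ih]

lemma sum_lie_fin {ι M : Type*} [LieRing M] (s : Finset ι) (f : ι → M) (E : M) :
    ⁅∑ i ∈ s, f i, E⁆ = ∑ i ∈ s, ⁅f i, E⁆ := by
  induction s using Finset.cons_induction with
  | empty => simp
  | cons i s hi ih => simp [Finset.sum_cons, add_lie, ih]

lemma lie_smul_der (K R : Type) [Field K] [Field R] [Algebra K R]
    (a : R) (d E : Derivation K R R) : ⁅a • d, E⁆ = a • ⁅d, E⁆ - E a • d := by
  ext s
  simp only [Derivation.commutator_apply, Derivation.smul_apply, Derivation.sub_apply,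
    Derivation.leibniz, smul_eq_mul, map_mul]
  ring

set_option maxHeartbeats 2000000 in
set_option synthInstance.maxHeartbeats 1000000 in
/-- Let `K` be an algebraically closed field, `L` a finite-dimensional Lie algebra over `K`, `R`
a field extension of `K`, and `φ : L → Der_K(R)` an injective homomorphism of Lie algebras over
`K` such that the `R`-linear span of `φ(L)` in `Der_K(R)` has finite dimension `k` over `R`.
Then `L` has a Lie subalgebra `L₁` of codimension `k` over `K`. -/
theorem exists_lieSubalgebra_of_codim_of_injection
    (K R L : Type) [Field K] [IsAlgClosed K] [Field R] [Algebra K R]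
    [LieRing L] [LieAlgebra K L] [FiniteDimensional K L]
    (φ : L →ₗ⁅K⁆ Derivation K R R) (hφ : Function.Injective φ) (k : ℕ)
    (hfin : Module.Finite R (Submodule.span R (Set.range (φ : L → Derivation K R R))))
    (hk : Module.finrank R (Submodule.span R (Set.range (φ : L → Derivation K R R))) = k) :
    ∃ L₁ : LieSubalgebra K L, Module.finrank K (L ⧸ L₁.toSubmodule) = k := by
  classical
  set W : Submodule R (Derivation K R R) :=
    Submodule.span R (Set.range (φ : L → Derivation K R R)) with hWdef
  have hmem : ∀ x : L, φ x ∈ W := fun x => Submodule.subset_span (Set.mem_range_self x)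
  let Φ : L →ₗ[K] ↥(W.restrictScalars K) :=
    LinearMap.codRestrict (W.restrictScalars K) φ.toLinearMap hmem
  have hspan : ⊤ ≤ Submodule.span R
      {x : ↥W | (x : Derivation K R R) ∈ Set.range (φ : L → Derivation K R R)} :=
    le_of_eq (Submodule.span_setOf_mem_eq_top).symm
  let b0 := Module.Basis.ofSpan hspan
  have hfd : FiniteDimensional R ↥W := hfin
  let eqv := b0.indexEquiv (Module.finBasisOfFinrankEq R ↥W hk)
  let B : Module.Basis (Fin k) R ↥W := b0.reindex eqv
  have hB : ∀ i, (B i : Derivation K R R) ∈ Set.range (φ : L → Derivation K R R) := by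
    intro i
    have h1 : B i = b0 (eqv.symm i) := Module.Basis.reindex_apply b0 eqv i
    have h2 : b0 (eqv.symm i) ∈
        {x : ↥W | (x : Derivation K R R) ∈ Set.range (φ : L → Derivation K R R)} :=
      Module.Basis.ofSpan_subset hspan (Set.mem_range_self (eqv.symm i))
    rw [h1]; exact h2
  have he : ∀ i, ∃ x : L, φ x = (B i : Derivation K R R) := fun i => hB i
  choose e hee using he
  -- coordinates
  let cL : Fin k → (L →ₗ[K] R) := fun i =>
    (((Finsupp.lapply i : (Fin k →₀ R) →ₗ[R] R).restrictScalars K) ∘ₗ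
      (B.repr.toLinearMap.restrictScalars K)) ∘ₗ Φ
  have hc : ∀ (i : Fin k) (x : L), cL i x = B.repr ⟨φ x, hmem x⟩ i := fun i x => rfl
  -- expansion of φ x in the basis
  have expand : ∀ x : L,
      (φ x : Derivation K R R) = ∑ i, cL i x • (φ (e i) : Derivation K R R) := by
    intro x
    have h := congrArg (Subtype.val) (B.sum_repr ⟨φ x, hmem x⟩)
    simp only [Submodule.coe_sum, SetLike.val_smul] at h
    rw [← h]
    apply Finset.sum_congr rfl
    intro i _
    rw [hc, hee]
  -- evaluation of φ y at an element of R
  have evalφ : ∀ (y : L) (r : R), (φ y) r = ∑ j, cL j y * (φ (e j)) r := by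
    intro y r
    conv_lhs => rw [expand y]
    rw [derivation_sum_apply]
    simp [Derivation.smul_apply, smul_eq_mul]
  -- coordinates of basis elements
  have hdelta : ∀ i j, cL i (e j) = if j = i then 1 else 0 := by
    intro i j
    rw [hc]
    have : (⟨φ (e j), hmem (e j)⟩ : ↥W) = B j := Subtype.ext (hee j)
    rw [this, B.repr_self, Finsupp.single_apply]
  -- the key identity (★)
  have star : ∀ (x y : L) (l : Fin k),
      cL l ⁅x, y⁆ = (∑ i, cL i x * cL l ⁅e i, y⁆) - (φ y) (cL l x) := by
    intro x y l
    -- Derivation-level identity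
    have hder : (φ ⁅x, y⁆ : Derivation K R R)
        = ∑ i, cL i x • (φ ⁅e i, y⁆ : Derivation K R R)
          - ∑ i, ((φ y) (cL i x)) • (φ (e i) : Derivation K R R) := by
      rw [LieHom.map_lie]
      conv_lhs => rw [expand x]
      rw [sum_lie_fin, ← Finset.sum_sub_distrib]
      apply Finset.sum_congr rfl
      intro i _
      rw [lie_smul_der, ← LieHom.map_lie]
    -- lift to W
    have hW : (⟨φ ⁅x, y⁆, hmem _⟩ : ↥W)
        = ∑ i, cL i x • (⟨φ ⁅e i, y⁆, hmem _⟩ : ↥W)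
          - ∑ i, ((φ y) (cL i x)) • B i := by
      apply Subtype.ext
      simp only [Submodule.coe_sub, Submodule.coe_sum, SetLike.val_smul]
      rw [hder]
      congr 1
      apply Finset.sum_congr rfl
      intro i _
      rw [hee]
    have h2 := congrArg (fun w : ↥W => B.repr w l) hW
    simp only [map_sub, map_sum, map_smul, Finsupp.sub_apply, Finset.sum_apply',
      Finsupp.smul_apply, B.repr_self, Finsupp.single_apply,
      smul_eq_mul, mul_ite, mul_one, mul_zero, Finset.sum_ite_eq,
      Finset.mem_univ, if_true] at h2
    rw [hc, h2]
    congr 1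
    simp
  -- the D-formula
  have hD : ∀ (j l : Fin k) (x : L), (φ (e j)) (cL l x)
      = (∑ i, cL i x * cL l ⁅e i, e j⁆) - cL l ⁅x, e j⁆ := by
    intro j l x
    linear_combination star x (e j) l
  -- the finitely generated subalgebra A
  let n := Module.finrank K L
  let bL : Module.Basis (Fin n) K L := Module.finBasis K L
  let A : Subalgebra K R := Algebra.adjoin K (Set.range fun p : Fin k × Fin n => cL p.1 (bL p.2))
  have hA : ∀ (i : Fin k) (x : L), cL i x ∈ A := by
    intro i x
    have hx : cL i x = ∑ j, bL.repr x j • cL i (bL j) := by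
      conv_lhs => rw [← bL.sum_repr x]
      rw [map_sum]
      simp [map_smul]
    rw [hx]
    exact sum_mem fun j _ => A.smul_mem (Algebra.subset_adjoin ⟨(i, j), rfl⟩) _
  have hA2 : ∀ (j l : Fin k) (x : L), (φ (e j)) (cL l x) ∈ A := by
    intro j l x
    rw [hD]
    exact sub_mem (sum_mem fun i _ => mul_mem (hA i x) (hA l ⁅e i, e j⁆)) (hA l ⁅x, e j⁆)
  have hfg : A.FG := by
    refine ⟨Finset.univ.image fun p : Fin k × Fin n => cL p.1 (bL p.2), ?_⟩
    rw [Finset.coe_image, Finset.coe_univ, Set.image_univ]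
  haveI hft : Algebra.FiniteType K ↥A := (Subalgebra.fg_iff_finiteType A).mp hfg
  -- a K-point of A via the Nullstellensatz
  haveI : Nontrivial ↥A := ⟨⟨0, 1, fun h => absurd (congrArg Subtype.val h) (by simp)⟩⟩
  obtain ⟨m, hm⟩ := Ideal.exists_maximal ↥A
  haveI := hm
  letI : Field (↥A ⧸ m) := Ideal.Quotient.field m
  haveI : Algebra.FiniteType K (↥A ⧸ m) :=
    Algebra.FiniteType.of_surjective (Ideal.Quotient.mkₐ K m) (Ideal.Quotient.mkₐ_surjective K m)
  haveI : Module.Finite K (↥A ⧸ m) := finite_of_finite_type_of_isJacobsonRing K (↥A ⧸ m)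
  haveI : Algebra.IsIntegral K (↥A ⧸ m) := Algebra.IsIntegral.of_finite K (↥A ⧸ m)
  have hsurj : Function.Surjective (algebraMap K (↥A ⧸ m)) :=
    IsAlgClosed.algebraMap_bijective_of_isIntegral.2
  have hinj : Function.Injective (algebraMap K (↥A ⧸ m)) := (algebraMap K (↥A ⧸ m)).injective
  let eKF : K ≃+* (↥A ⧸ m) := RingEquiv.ofBijective (algebraMap K (↥A ⧸ m)) ⟨hinj, hsurj⟩
  let σ : ↥A →+* K := eKF.symm.toRingHom.comp (Ideal.Quotient.mk m)
  have hσalg : ∀ δ : K, σ (algebraMap K ↥A δ) = δ := by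
    intro δ
    have h1 : (Ideal.Quotient.mk m) (algebraMap K ↥A δ) = algebraMap K (↥A ⧸ m) δ := by
      rw [← Ideal.Quotient.algebraMap_eq, ← IsScalarTower.algebraMap_apply]
    show eKF.symm ((Ideal.Quotient.mk m) (algebraMap K ↥A δ)) = δ
    rw [h1]
    exact eKF.symm_apply_apply δ
  -- the linear map θ
  let θ : L →ₗ[K] (Fin k → K) :=
  { toFun := fun x i => σ ⟨cL i x, hA i x⟩
    map_add' := by
      intro x y
      funext i
      have h : (⟨cL i (x + y), hA i _⟩ : ↥A) = ⟨cL i x, hA i x⟩ + ⟨cL i y, hA i y⟩ :=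
        Subtype.ext (by simp [map_add])
      show σ _ = σ _ + σ _
      rw [h, map_add]
    map_smul' := by
      intro δ x
      funext i
      have h : (⟨cL i (δ • x), hA i _⟩ : ↥A) = algebraMap K ↥A δ * ⟨cL i x, hA i x⟩ :=
        Subtype.ext (by
          simp only [map_smul, MulMemClass.coe_mul]
          rw [Algebra.smul_def]
          congr 1)
      show σ _ = δ * σ _
      rw [h, map_mul, hσalg] }
  have hθ : ∀ (x : L) (i : Fin k), θ x i = σ ⟨cL i x, hA i x⟩ := fun x i => rfl
  -- θ is surjective
  have hθe : ∀ j i, θ (e j) i = if j = i then 1 else 0 := by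
    intro j i
    rw [hθ]
    have h : (⟨cL i (e j), hA i _⟩ : ↥A) = if j = i then 1 else 0 := by
      apply Subtype.ext
      show cL i (e j) = _
      rw [hdelta]
      split <;> simp
    rw [h]
    split <;> simp
  have hsurjθ : Function.Surjective θ := by
    intro v
    refine ⟨∑ j, v j • e j, ?_⟩
    funext i
    rw [map_sum]
    simp only [map_smul, Finset.sum_apply, Pi.smul_apply, hθe, smul_eq_mul, mul_ite, mul_one,
      mul_zero, Finset.sum_ite_eq, Finset.sum_ite_eq', Finset.mem_univ, if_true]
  -- the Lie subalgebra
  let L₁ : LieSubalgebra K L :=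
  { LinearMap.ker θ with
    lie_mem' := by
      intro x y hx hy
      have hx' : ∀ i, σ ⟨cL i x, hA i x⟩ = 0 := fun i => congrFun (LinearMap.mem_ker.mp hx) i
      have hy' : ∀ i, σ ⟨cL i y, hA i y⟩ = 0 := fun i => congrFun (LinearMap.mem_ker.mp hy) i
      apply LinearMap.mem_ker.mpr
      funext l
      rw [hθ]
      have key : cL l ⁅x, y⁆
          = (∑ i, cL i x * cL l ⁅e i, y⁆) - ∑ j, cL j y * ((φ (e j)) (cL l x)) := by
        rw [star x y l, evalφ y (cL l x)]
      have keyA : (⟨cL l ⁅x, y⁆, hA l _⟩ : ↥A)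
          = (∑ i, (⟨cL i x, hA i x⟩ : ↥A) * ⟨cL l ⁅e i, y⁆, hA l _⟩)
            - ∑ j, (⟨cL j y, hA j y⟩ : ↥A) * ⟨(φ (e j)) (cL l x), hA2 j l x⟩ := by
        apply Subtype.ext
        push_cast
        exact key
      rw [keyA, map_sub, map_sum, map_sum]
      simp only [map_mul]
      simp [hx', hy'] }
  refine ⟨L₁, ?_⟩
  have hL₁ : L₁.toSubmodule = LinearMap.ker θ := rfl
  rw [hL₁, LinearEquiv.finrank_eq (LinearMap.quotKerEquivOfSurjective θ hsurjθ)]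
  simp [Module.finrank_pi]
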